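/- Let Z be a positive random variable with m ≤ Z ≤ M a.s. (0 < m ≤ M) and s > 0 a constant. Then E[log(1 + s/(a + Z))] ≤ ((m+M)²/(4mM)) · log(1 + E[s/(a+Z)]) for a ≥ 0, given that log(1 + s/(a+Z)) ≥ 0. -/

import Mathlib

open MeasureTheory Real

/-- Kantorovich-based rate bound: let `Z` take values in `[m, M]` a.s. (`0 < m ≤ M`),
`a ≥ 0`, `s > 0`, and set `Y = s/(a + Z)` with bounds `y_min = s/(a+M)`,
`y_max = s/(a+m)`.  Then
`E[log(1 + Y)] ≤ ((y_min + y_max)²/(4 y_min y_max)) · log(1 + E[Y])`. -/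
theorem kantorovich_log_rate_bound
    {Ω : Type*} [MeasurableSpace Ω] (P : Measure Ω) [IsProbabilityMeasure P]
    (m M a s : ℝ) (hm : 0 < m) (hmM : m ≤ M) (ha : 0 ≤ a) (hs : 0 < s)
    (Z : Ω → ℝ) (hZmeas : Measurable Z)
    (hbd : ∀ᵐ ω ∂P, m ≤ Z ω ∧ Z ω ≤ M)
    (hint1 : Integrable (fun ω => Real.log (1 + s / (a + Z ω))) P)
    (hint2 : Integrable (fun ω => s / (a + Z ω)) P) :
    ∫ ω, Real.log (1 + s / (a + Z ω)) ∂P ≤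
      ((s / (a + M) + s / (a + m)) ^ 2 / (4 * (s / (a + M)) * (s / (a + m)))) *
        Real.log (1 + ∫ ω, s / (a + Z ω) ∂P) := by
  set μ := ∫ ω, s / (a + Z ω) ∂P with hμ
  have hYpos : ∀ᵐ ω ∂P, 0 < s / (a + Z ω) := by
    filter_upwards [hbd] with ω ⟨h1, h2⟩
    exact div_pos hs (by linarith)
  have hμ0 : 0 ≤ μ := integral_nonneg_of_ae (hYpos.mono fun ω h => h.le)
  have h1μ : (0:ℝ) < 1 + μ := by linarith
  -- pointwise tangent-line bound
  have hpt : ∀ᵐ ω ∂P, Real.log (1 + s / (a + Z ω)) ≤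
      Real.log (1 + μ) + (1 + μ)⁻¹ * (s / (a + Z ω) - μ) := by
    filter_upwards [hYpos] with ω hY
    have h1y : (0:ℝ) < 1 + s / (a + Z ω) := by linarith
    have := Real.log_le_sub_one_of_pos (x := (1 + s / (a + Z ω)) / (1 + μ))
      (div_pos h1y h1μ)
    rw [Real.log_div h1y.ne' h1μ.ne'] at this
    have h2 : (1 + s / (a + Z ω)) / (1 + μ) - 1 = (1 + μ)⁻¹ * (s / (a + Z ω) - μ) := by
      field_simp
      ring
    linarith [h2 ▸ this]
  have hintR2 : Integrable (fun ω => (1 + μ)⁻¹ * (s / (a + Z ω) - μ)) P := by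
    exact (hint2.sub (integrable_const _)).const_mul _
  have hintR : Integrable (fun ω => Real.log (1 + μ) + (1 + μ)⁻¹ * (s / (a + Z ω) - μ)) P :=
    (integrable_const _).add hintR2
  have hle : ∫ ω, Real.log (1 + s / (a + Z ω)) ∂P ≤
      ∫ ω, (Real.log (1 + μ) + (1 + μ)⁻¹ * (s / (a + Z ω) - μ)) ∂P :=
    integral_mono_ae hint1 hintR hpt
  have hz : ∫ ω, (1 + μ)⁻¹ * (s / (a + Z ω) - μ) ∂P = 0 := by
    rw [integral_const_mul, integral_sub hint2 (integrable_const _), integral_const]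
    simp [hμ]
  have hcalc : ∫ ω, (Real.log (1 + μ) + (1 + μ)⁻¹ * (s / (a + Z ω) - μ)) ∂P
      = Real.log (1 + μ) := by
    rw [integral_add (integrable_const _) hintR2, hz,
      integral_const]
    simp
  have hjensen : ∫ ω, Real.log (1 + s / (a + Z ω)) ∂P ≤ Real.log (1 + μ) :=
    hcalc ▸ hle
  -- K ≥ 1
  have hy1 : 0 < s / (a + M) := div_pos hs (by linarith)
  have hy2 : 0 < s / (a + m) := div_pos hs (by linarith)
  have hK : (1:ℝ) ≤ (s / (a + M) + s / (a + m)) ^ 2 / (4 * (s / (a + M)) * (s / (a + m))) := by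
    rw [le_div_iff₀ (by positivity)]
    nlinarith [sq_nonneg (s / (a + M) - s / (a + m))]
  have hlognn : 0 ≤ Real.log (1 + μ) := Real.log_nonneg (by linarith)
  calc ∫ ω, Real.log (1 + s / (a + Z ω)) ∂P ≤ Real.log (1 + μ) := hjensen
    _ = 1 * Real.log (1 + μ) := (one_mul _).symm
    _ ≤ _ := mul_le_mul_of_nonneg_right hK hlognn
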